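/- Let n be a positive integer. The number of residues a ∈ Z/2nZ satisfying a² ≡ 1 (mod 4n) is 2^{ρ(n)}, where ρ(n) is the number of distinct prime divisors of n. -/

import Mathlib

open Finset

def gcnt (n : ℕ) : ℕ := ((Finset.range n).filter (fun u => n ∣ u * (u + 1))).card

lemma gcnt_eq_zmod (n : ℕ) [NeZero n] :
    gcnt n = (Finset.univ.filter (fun u : ZMod n => u * (u + 1) = 0)).card := by
  unfold gcnt
  refine Finset.card_nbij' (fun u => (u : ZMod n)) (fun x => x.val) ?_ ?_ ?_ ?_
  · intro a ha
    simp only [mem_coe, mem_filter, mem_range] at ha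
    simp only [mem_coe, mem_filter, mem_univ, true_and]
    have : ((a * (a + 1) : ℕ) : ZMod n) = 0 := by
      rw [ZMod.natCast_eq_zero_iff]; exact ha.2
    push_cast at this
    exact this
  · intro x hx
    simp only [mem_coe, mem_filter, mem_univ, true_and] at hx
    simp only [mem_coe, mem_filter, mem_range]
    refine ⟨ZMod.val_lt x, ?_⟩
    rw [← ZMod.natCast_eq_zero_iff]
    push_cast
    rw [ZMod.natCast_val, ZMod.cast_id]
    exact hx
  · intro a ha
    simp only [mem_coe, mem_filter, mem_range] at ha
    exact ZMod.val_cast_of_lt ha.1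
  · intro x hx
    simp [ZMod.natCast_val, ZMod.cast_id]

lemma gcnt_mul {m n : ℕ} (hm : 0 < m) (hn : 0 < n) (h : m.Coprime n) :
    gcnt (m * n) = gcnt m * gcnt n := by
  have : NeZero m := ⟨hm.ne'⟩
  have : NeZero n := ⟨hn.ne'⟩
  have : NeZero (m * n) := ⟨(Nat.mul_pos hm hn).ne'⟩
  rw [gcnt_eq_zmod, gcnt_eq_zmod, gcnt_eq_zmod]
  let e := ZMod.chineseRemainder h
  have hcard : (Finset.univ.filter (fun u : ZMod (m*n) => u * (u + 1) = 0)).card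
      = (Finset.univ.filter (fun p : ZMod m × ZMod n => p.1 * (p.1 + 1) = 0 ∧ p.2 * (p.2 + 1) = 0)).card := by
    refine Finset.card_nbij' (fun u => e u) (fun p => e.symm p) ?_ ?_ ?_ ?_
    · intro u hu
      simp only [mem_coe, mem_filter, mem_univ, true_and] at hu ⊢
      have : e (u * (u+1)) = 0 := by rw [hu, map_zero]
      rw [map_mul, map_add, map_one] at this
      exact ⟨congrArg Prod.fst this, congrArg Prod.snd this⟩
    · intro p hp
      simp only [mem_coe, mem_filter, mem_univ, true_and] at hp ⊢
      have : e (e.symm p * (e.symm p + 1)) = 0 := by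
        rw [map_mul, map_add, map_one, RingEquiv.apply_symm_apply]
        exact Prod.ext hp.1 hp.2
      have := congrArg e.symm this
      rwa [RingEquiv.symm_apply_apply, map_zero] at this
    · intro u _; exact e.symm_apply_apply u
    · intro p _; exact e.apply_symm_apply p
  rw [hcard]
  have hset : (Finset.univ.filter (fun p : ZMod m × ZMod n => p.1 * (p.1 + 1) = 0 ∧ p.2 * (p.2 + 1) = 0))
      = (Finset.univ.filter (fun u : ZMod m => u * (u + 1) = 0)) ×ˢ
        (Finset.univ.filter (fun u : ZMod n => u * (u + 1) = 0)) := by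
    ext p
    simp [Finset.mem_product, and_assoc]
  rw [hset, Finset.card_product]

lemma gcnt_prime_pow {p k : ℕ} (hp : p.Prime) (hk : 0 < k) : gcnt (p ^ k) = 2 := by
  have h2 : 2 ≤ p ^ k := by
    calc 2 ≤ p := hp.two_le
    _ ≤ p ^ k := Nat.le_self_pow hk.ne' p
  have hset : ((Finset.range (p^k)).filter (fun u => p^k ∣ u * (u + 1))) = {0, p^k - 1} := by
    ext u
    simp only [mem_filter, mem_range, mem_insert, mem_singleton]
    constructor
    · rintro ⟨hlt, hdvd⟩
      have hcop : Nat.Coprime u (u+1) := by simp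
      have hor : p ^ k ∣ u ∨ p ^ k ∣ (u + 1) := by
        have hpd : p ∣ u * (u+1) := dvd_trans (dvd_pow_self p hk.ne') hdvd
        rcases (Nat.Prime.dvd_mul hp).1 hpd with h1 | h1
        · left
          have hcop2 : Nat.Coprime (p^k) (u+1) :=
            Nat.Coprime.pow_left k (Nat.Coprime.coprime_dvd_left h1 hcop)
          exact hcop2.dvd_of_dvd_mul_right hdvd
        · right
          have hcop2 : Nat.Coprime (p^k) u :=
            Nat.Coprime.pow_left k (Nat.Coprime.coprime_dvd_left h1 hcop.symm)
          exact hcop2.dvd_of_dvd_mul_right (by rwa [Nat.mul_comm] at hdvd)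
      rcases hor with h1 | h1
      · left; exact Nat.eq_zero_of_dvd_of_lt h1 hlt
      · have := Nat.le_of_dvd (by omega) h1
        right; omega
    · rintro (rfl | rfl)
      · exact ⟨by omega, by simp⟩
      · refine ⟨by omega, ?_⟩
        have he : (p^k - 1) + 1 = p^k := by omega
        rw [he]
        exact dvd_mul_left _ _
  rw [gcnt, hset]
  rw [Finset.card_insert_of_notMem (by simp only [mem_singleton]; omega), Finset.card_singleton]

lemma main_reduction (n : ℕ) (hn : 0 < n) :
    ((Finset.range (2 * n)).filter (fun a : ℕ => (4 * n : ℤ) ∣ (a : ℤ) ^ 2 - 1)).card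
      = ((Finset.range n).filter (fun u => n ∣ u * (u + 1))).card := by
  have hodd : ∀ a : ℕ, (4 * n : ℤ) ∣ (a : ℤ) ^ 2 - 1 → a % 2 = 1 := by
    intro a ha
    by_contra h
    obtain ⟨b, rfl⟩ : ∃ b, a = 2 * b := ⟨a / 2, by omega⟩
    have h4 : (4:ℤ) ∣ ((2*b : ℕ) : ℤ)^2 - 1 := dvd_trans ⟨n, by push_cast; ring⟩ ha
    obtain ⟨c, hc⟩ := h4
    push_cast at hc
    rw [show (2*(b:ℤ))^2 = 4*(b:ℤ)^2 from by ring] at hc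
    generalize (b:ℤ)^2 = x at hc
    omega
  refine Finset.card_nbij' (fun a => a / 2) (fun u => 2 * u + 1) ?_ ?_ ?_ ?_
  · intro a ha
    simp only [mem_coe, mem_filter, mem_range] at ha ⊢
    obtain ⟨hlt, hdvd⟩ := ha
    have h1 := hodd a hdvd
    refine ⟨by omega, ?_⟩
    obtain ⟨c, hc⟩ := hdvd
    have ha2 : (a : ℤ) = 2 * (a/2 : ℕ) + 1 := by push_cast; omega
    rw [ha2] at hc
    have h4 : (4:ℤ) * (((a/2 : ℕ) : ℤ) * (((a/2 : ℕ) : ℤ) + 1)) = 4 * ((n:ℤ) * c) := by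
      linear_combination hc
    have hdz : (n:ℤ) ∣ ((a/2 : ℕ) : ℤ) * (((a/2 : ℕ) : ℤ) + 1) :=
      ⟨c, mul_left_cancel₀ (by norm_num) h4⟩
    have : (n:ℤ) ∣ (((a/2) * (a/2 + 1) : ℕ) : ℤ) := by push_cast; exact hdz
    exact_mod_cast this
  · intro u hu
    simp only [mem_coe, mem_filter, mem_range] at hu ⊢
    obtain ⟨hlt, ⟨c, hc⟩⟩ := hu
    refine ⟨by omega, ⟨(c:ℤ), ?_⟩⟩
    have : ((u * (u+1) : ℕ) : ℤ) = ((n * c : ℕ) : ℤ) := by exact_mod_cast hc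
    push_cast at this
    push_cast
    linear_combination 4 * this
  · intro a ha
    simp only [mem_coe, mem_filter, mem_range] at ha
    have := hodd a ha.2
    show 2 * (a / 2) + 1 = a
    omega
  · intro u _
    show (2 * u + 1) / 2 = u
    omega


/-- The number of residues `a ∈ Z/2nZ` with `a² ≡ 1 (mod 4n)` is `2^{ρ(n)}`. -/
theorem stmt_1 (n : ℕ) (hn : 0 < n) :
    ((Finset.range (2 * n)).filter (fun a : ℕ => (4 * n : ℤ) ∣ (a : ℤ) ^ 2 - 1)).card
      = 2 ^ n.primeFactors.card := by
  rw [main_reduction n hn, show ((Finset.range n).filter (fun u => n ∣ u * (u + 1))).card = gcnt n from rfl]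
  revert hn
  induction n using Nat.recOnPosPrimePosCoprime with
  | prime_pow p k hp hk =>
    intro _
    rw [gcnt_prime_pow hp hk, Nat.primeFactors_prime_pow hk.ne' hp]
    simp
  | zero => intro h; omega
  | one =>
    intro _
    rw [show gcnt 1 = 1 from by decide]
    simp
  | coprime a b ha hb hab iha ihb =>
    intro _
    rw [gcnt_mul (by omega) (by omega) hab, Nat.Coprime.primeFactors_mul hab,
      Finset.card_union_of_disjoint (Nat.Coprime.disjoint_primeFactors hab),
      pow_add, iha (by omega), ihb (by omega)]
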